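/- Let q be a prime power, let n ≥ 2 be an integer, and fix a generator U_0 of the hyperbolic polar space D_n of rank n over F_q. Then the set Y of all generators W with dim(W ∩ U_0) ≡ n (mod 2) is an (n−1)-Steiner system; that is, every (n−1)-dimensional totally isotropic subspace of V is contained in exactly one generator W satisfying dim(W ∩ U_0) ≡ n (mod 2). -/

import Mathlib

set_option maxHeartbeats 1600000

/-- The hyperbolic quadratic form `Q(x) = ∑_{i=1}^n x_i x_{n+i}` on `(F_q)^{2n}`. -/
def hypQ (F : Type*) [Field F] (n : ℕ) (x : Fin (2 * n) → F) : F :=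
  ∑ i : Fin n, x ⟨i.1, by have := i.2; omega⟩ * x ⟨n + i.1, by have := i.2; omega⟩

/-- A subspace is totally isotropic for the hyperbolic quadratic form. -/
def HypIsotropic (F : Type*) [Field F] (n : ℕ)
    (U : Submodule F (Fin (2 * n) → F)) : Prop :=
  ∀ u ∈ U, hypQ F n u = 0

namespace HalfHyp

variable {F : Type*} [Field F] {n : ℕ}

def il (n : ℕ) (i : Fin n) : Fin (2 * n) := ⟨i.1, by have := i.2; omega⟩
def ir (n : ℕ) (i : Fin n) : Fin (2 * n) := ⟨n + i.1, by have := i.2; omega⟩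

lemma hypQ_def (x : Fin (2 * n) → F) :
    hypQ F n x = ∑ i : Fin n, x (il n i) * x (ir n i) := rfl

/-- The polar bilinear form of `hypQ`. -/
def hypB (F : Type*) [Field F] (n : ℕ) :
    LinearMap.BilinForm F (Fin (2 * n) → F) :=
  LinearMap.mk₂ F
    (fun x y => ∑ i : Fin n, (x (il n i) * y (ir n i) + x (ir n i) * y (il n i)))
    (fun m₁ m₂ y => by
      simp only [Pi.add_apply, ← Finset.sum_add_distrib]
      exact Finset.sum_congr rfl fun i _ => by ring)
    (fun c m y => by
      simp only [Pi.smul_apply, smul_eq_mul, Finset.mul_sum]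
      exact Finset.sum_congr rfl fun i _ => by ring)
    (fun x m₁ m₂ => by
      simp only [Pi.add_apply, ← Finset.sum_add_distrib]
      exact Finset.sum_congr rfl fun i _ => by ring)
    (fun c x m => by
      simp only [Pi.smul_apply, smul_eq_mul, Finset.mul_sum]
      exact Finset.sum_congr rfl fun i _ => by ring)

lemma hypB_apply (x y : Fin (2 * n) → F) :
    hypB F n x y = ∑ i : Fin n, (x (il n i) * y (ir n i) + x (ir n i) * y (il n i)) := rfl

lemma hypB_symm (x y : Fin (2 * n) → F) : hypB F n x y = hypB F n y x := by
  rw [hypB_apply, hypB_apply]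
  exact Finset.sum_congr rfl fun i _ => by ring

lemma hypB_isRefl : (hypB F n).IsRefl := fun x y h => by rwa [hypB_symm]

lemma hyp_polar (x y : Fin (2 * n) → F) :
    hypQ F n (x + y) = hypQ F n x + hypQ F n y + hypB F n x y := by
  rw [hypQ_def, hypQ_def, hypQ_def, hypB_apply, ← Finset.sum_add_distrib,
    ← Finset.sum_add_distrib]
  exact Finset.sum_congr rfl fun i _ => by simp only [Pi.add_apply]; ring

lemma hypQ_smul (c : F) (x : Fin (2 * n) → F) : hypQ F n (c • x) = c ^ 2 * hypQ F n x := by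
  rw [hypQ_def, hypQ_def, Finset.mul_sum]
  exact Finset.sum_congr rfl fun i _ => by simp only [Pi.smul_apply, smul_eq_mul]; ring

lemma il_ne_ir (i j : Fin n) : il n i ≠ ir n j := by
  intro h
  have h' : (i : ℕ) = n + j := congrArg Fin.val h
  omega

lemma hypB_single_ir (x : Fin (2 * n) → F) (i : Fin n) :
    hypB F n x (Pi.single (ir n i) 1) = x (il n i) := by
  rw [hypB_apply, Finset.sum_eq_single i]
  · rw [Pi.single_apply, Pi.single_apply, if_pos rfl, if_neg (il_ne_ir i i)]
    ring
  · intro b _ hb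
    rw [Pi.single_apply, Pi.single_apply, if_neg (il_ne_ir b i),
      if_neg (fun h => hb (by simpa [ir, Fin.ext_iff] using h))]
    ring
  · simp
lemma hypB_single_il (x : Fin (2 * n) → F) (i : Fin n) :
    hypB F n x (Pi.single (il n i) 1) = x (ir n i) := by
  rw [hypB_apply, Finset.sum_eq_single i]
  · rw [Pi.single_apply, Pi.single_apply, if_pos rfl, if_neg (Ne.symm (il_ne_ir i i))]
    ring
  · intro b _ hb
    rw [Pi.single_apply, Pi.single_apply, if_neg (Ne.symm (il_ne_ir i b)),
      if_neg (fun h => hb (by simpa [il, Fin.ext_iff] using h))]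
    ring
  · simp

lemma hypB_nondeg : (hypB F n).Nondegenerate := by
  suffices hL : LinearMap.SeparatingLeft (hypB F n) from
    ⟨hL, fun y hy => hL y fun x => by rw [hypB_symm]; exact hy x⟩
  intro x hx
  funext j
  by_cases hj : j.1 < n
  · have h := hx (Pi.single (ir n ⟨j.1, hj⟩) 1)
    rw [hypB_single_ir] at h
    simpa [il] using h
  · have hj2 : j.1 - n < n := by have := j.2; omega
    have h := hx (Pi.single (il n ⟨j.1 - n, hj2⟩) 1)
    rw [hypB_single_il] at h
    have : (⟨n + (j.1 - n), by omega⟩ : Fin (2 * n)) = j := by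
      simp [Fin.ext_iff]; omega
    rwa [show ir n ⟨j.1 - n, hj2⟩ = j from this] at h

lemma hypB_self (x : Fin (2 * n) → F) (hx : hypQ F n x = 0) : hypB F n x x = 0 := by
  have := hyp_polar x x
  have h2 : x + x = (2 : F) • x := by funext k; simp [Pi.smul_apply]; ring
  rw [h2, hypQ_smul, hx] at this
  simpa using this.symm

lemma hypB_zero_of_iso {U : Submodule F (Fin (2 * n) → F)} (hU : HypIsotropic F n U)
    {t u : Fin (2 * n) → F} (ht : t ∈ U) (hu : u ∈ U) : hypB F n t u = 0 := by
  have := hyp_polar t u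
  rw [hU _ (U.add_mem ht hu), hU t ht, hU u hu] at this
  simpa using this.symm

open Module Submodule LinearMap.BilinForm

lemma orth_sup (X Y : Submodule F (Fin (2 * n) → F)) :
    (hypB F n).orthogonal (X ⊔ Y) = (hypB F n).orthogonal X ⊓ (hypB F n).orthogonal Y := by
  ext m
  simp only [mem_orthogonal_iff, Submodule.mem_inf]
  constructor
  · exact fun h => ⟨fun v hv => h v (Submodule.mem_sup_left hv),
      fun v hv => h v (Submodule.mem_sup_right hv)⟩
  · rintro ⟨h1, h2⟩ v hv
    obtain ⟨x, hx, y, hy, rfl⟩ := Submodule.mem_sup.mp hv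
    have := h1 x hx
    have := h2 y hy
    rw [map_add, LinearMap.add_apply, h1 x hx, h2 y hy, add_zero]

lemma hyp_dim : finrank F (Fin (2 * n) → F) = 2 * n := by
  simp [Module.finrank_fin_fun]

lemma orth_dim (U : Submodule F (Fin (2 * n) → F)) :
    finrank F U + finrank F ((hypB F n).orthogonal U) = 2 * n := by
  have := LinearMap.BilinForm.finrank_add_finrank_orthogonal (B := hypB F n) hypB_isRefl U
  rwa [orthogonal_top_eq_bot hypB_nondeg, inf_bot_eq, finrank_bot, add_zero, hyp_dim]
    at this

lemma orth_orth (U : Submodule F (Fin (2 * n) → F)) :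
    (hypB F n).orthogonal ((hypB F n).orthogonal U) = U :=
  orthogonal_orthogonal hypB_nondeg hypB_isRefl U

lemma iso_le_orth {U : Submodule F (Fin (2 * n) → F)} (hU : HypIsotropic F n U) :
    U ≤ (hypB F n).orthogonal U := fun u hu =>
  mem_orthogonal_iff.mpr fun t ht => hypB_zero_of_iso hU ht hu

lemma finrank_sup_span {X : Submodule F (Fin (2 * n) → F)} {x : Fin (2 * n) → F}
    (hx : x ∉ X) : finrank F ↥(X ⊔ (F ∙ x)) = finrank F X + 1 := by
  have hx0 : x ≠ 0 := fun h => hx (h ▸ X.zero_mem)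
  have hd : X ⊓ (F ∙ x) = ⊥ := by
    rw [eq_bot_iff]
    rintro y hy
    obtain ⟨hyX, hyx⟩ := Submodule.mem_inf.mp hy
    obtain ⟨c, rfl⟩ := Submodule.mem_span_singleton.mp hyx
    rcases eq_or_ne c 0 with rfl | hc
    · simp
    · exact absurd (by simpa [smul_smul, inv_mul_cancel₀ hc] using X.smul_mem c⁻¹ hyX) hx
  have h := Submodule.finrank_sup_add_finrank_inf_eq X (F ∙ x)
  rw [hd, finrank_bot, add_zero, finrank_span_singleton hx0] at h
  omega


lemma hypB_left_zero {T : Submodule F (Fin (2 * n) → F)} {v t : Fin (2 * n) → F}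
    (hv : v ∈ (hypB F n).orthogonal T) (ht : t ∈ T) : hypB F n t v = 0 :=
  mem_orthogonal_iff.mp hv t ht

lemma iso_sup_span {T : Submodule F (Fin (2 * n) → F)} (hT : HypIsotropic F n T)
    {v : Fin (2 * n) → F} (hv : v ∈ (hypB F n).orthogonal T) (hQv : hypQ F n v = 0) :
    HypIsotropic F n (T ⊔ (F ∙ v)) := by
  intro x hx
  obtain ⟨t, ht, y, hy, rfl⟩ := Submodule.mem_sup.mp hx
  obtain ⟨c, rfl⟩ := Submodule.mem_span_singleton.mp hy
  rw [hyp_polar, hypQ_smul, hQv, hT t ht, map_smul, smul_eq_mul,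
    hypB_left_zero hv ht]
  ring

lemma gen_eq {T W W' : Submodule F (Fin (2 * n) → F)} (hn : 1 ≤ n)
    (hTr : Module.finrank F T = n - 1)
    (hTW : T ≤ W) (hTW' : T ≤ W')
    (hW : Module.finrank F W = n) (hW' : Module.finrank F W' = n)
    {x : Fin (2 * n) → F} (hxW : x ∈ W) (hxW' : x ∈ W') (hxT : x ∉ T) : W = W' := by
  have h1 : T ⊔ (F ∙ x) = W :=
    Submodule.eq_of_le_of_finrank_le
      (sup_le hTW ((Submodule.span_singleton_le_iff_mem x W).mpr hxW))
      (by rw [hW, finrank_sup_span hxT, hTr]; omega)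
  have h2 : T ⊔ (F ∙ x) = W' :=
    Submodule.eq_of_le_of_finrank_le
      (sup_le hTW' ((Submodule.span_singleton_le_iff_mem x W').mpr hxW'))
      (by rw [hW', finrank_sup_span hxT, hTr]; omega)
  rw [← h1, h2]

end HalfHyp

open Module Submodule LinearMap.BilinForm HalfHyp in
theorem half_hyperbolic_is_steiner (q n : ℕ) (hq : IsPrimePow q) (hn : 2 ≤ n)
    (F : Type*) [Field F] [Fintype F] (hcard : Fintype.card F = q)
    (U₀ : Submodule F (Fin (2 * n) → F))
    (hU₀ : HypIsotropic F n U₀ ∧ Module.finrank F ↥U₀ = n)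
    (T : Submodule F (Fin (2 * n) → F))
    (hT : HypIsotropic F n T) (hTrank : Module.finrank F ↥T = n - 1) :
    ∃! W : Submodule F (Fin (2 * n) → F),
      (HypIsotropic F n W ∧ Module.finrank F ↥W = n ∧
        Module.finrank F ↥(W ⊓ U₀) % 2 = n % 2) ∧ T ≤ W := by
  classical
  obtain ⟨hU₀iso, hU₀rank⟩ := hU₀
  -- basic orthogonality facts
  have hTle : T ≤ (hypB F n).orthogonal T := iso_le_orth hT
  have hPTdim : finrank F ↥((hypB F n).orthogonal T) = n + 1 := by
    have := orth_dim T; rw [hTrank] at this; omega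
  have hU₀orth : (hypB F n).orthogonal U₀ = U₀ := by
    refine (Submodule.eq_of_le_of_finrank_le (iso_le_orth hU₀iso) ?_).symm
    have := orth_dim U₀; omega
  set a := finrank F ↥(U₀ ⊓ T) with hadef
  have ha_le : a ≤ n - 1 := hTrank ▸ finrank_mono inf_le_right
  have hDsup : (hypB F n).orthogonal (U₀ ⊔ (hypB F n).orthogonal T) = U₀ ⊓ T := by
    rw [orth_sup, hU₀orth, orth_orth]
  have hsupdim : finrank F ↥(U₀ ⊔ (hypB F n).orthogonal T) + a = 2 * n := by
    have := orth_dim (U₀ ⊔ (hypB F n).orthogonal T); rwa [hDsup] at this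
  have hinfdim : finrank F ↥(U₀ ⊓ (hypB F n).orthogonal T) = a + 1 := by
    have h1 := Submodule.finrank_sup_add_finrank_inf_eq U₀ ((hypB F n).orthogonal T)
    rw [hU₀rank, hPTdim] at h1
    omega
  -- find v ∈ (U₀ ∩ T^⊥) \ T
  have hex : ∃ v, v ∈ U₀ ⊓ (hypB F n).orthogonal T ∧ v ∉ T := by
    by_contra h
    push_neg at h
    have hle : U₀ ⊓ (hypB F n).orthogonal T ≤ U₀ ⊓ T := fun x hx =>
      Submodule.mem_inf.mpr ⟨(Submodule.mem_inf.mp hx).1, h x hx⟩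
    have := finrank_mono hle
    omega
  obtain ⟨v, hv, hvT⟩ := hex
  have hvU₀ : v ∈ U₀ := (Submodule.mem_inf.mp hv).1
  have hvPT : v ∈ (hypB F n).orthogonal T := (Submodule.mem_inf.mp hv).2
  have hQv : hypQ F n v = 0 := hU₀iso v hvU₀
  -- the first generator through T
  set W₁ : Submodule F (Fin (2 * n) → F) := T ⊔ (F ∙ v) with hW₁def
  have hW₁dim : finrank F ↥W₁ = n := by
    rw [hW₁def, finrank_sup_span hvT, hTrank]; omega
  have hW₁iso : HypIsotropic F n W₁ := iso_sup_span hT hvPT hQv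
  have hTW₁ : T ≤ W₁ := le_sup_left
  have hvW₁ : v ∈ W₁ := by
    rw [hW₁def]; exact Submodule.mem_sup_right (Submodule.mem_span_singleton_self v)
  have hW₁PT : W₁ ≤ (hypB F n).orthogonal T := by
    rw [hW₁def]
    exact sup_le hTle ((Submodule.span_singleton_le_iff_mem _ _).mpr hvPT)
  -- find a second isotropic vector w with B v w = 1
  have hexu : ∃ u ∈ (hypB F n).orthogonal T, hypB F n v u = 1 := by
    have h1 : ∃ u ∈ (hypB F n).orthogonal T, hypB F n v u ≠ 0 := by
      by_contra h
      push_neg at h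
      have : v ∈ (hypB F n).orthogonal ((hypB F n).orthogonal T) :=
        mem_orthogonal_iff.mpr fun u hu => by
          show hypB F n u v = 0
          rw [hypB_symm]; exact h u hu
      rw [orth_orth] at this
      exact hvT this
    obtain ⟨u₁, hu₁PT, hu₁⟩ := h1
    refine ⟨(hypB F n v u₁)⁻¹ • u₁, Submodule.smul_mem _ _ hu₁PT, ?_⟩
    rw [map_smul, smul_eq_mul]
    exact inv_mul_cancel₀ hu₁
  obtain ⟨u, huPT, hBvu⟩ := hexu
  have hBvv : hypB F n v v = 0 := hypB_self v hQv
  have hexw : ∃ w ∈ (hypB F n).orthogonal T, hypQ F n w = 0 ∧ hypB F n v w = 1 := by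
    refine ⟨u + (-(hypQ F n u)) • v,
      Submodule.add_mem _ huPT (Submodule.smul_mem _ _ hvPT), ?_, ?_⟩
    · rw [hyp_polar, hypQ_smul, hQv, map_smul, smul_eq_mul, hypB_symm, hBvu]
      ring
    · rw [map_add, map_smul, smul_eq_mul, hBvu, hBvv]
      ring
  obtain ⟨w, hwPT, hQw, hBvw⟩ := hexw
  have hBvW₁ : ∀ x ∈ W₁, hypB F n v x = 0 := by
    intro x hx
    rw [hW₁def] at hx
    obtain ⟨t, ht, y, hy, rfl⟩ := Submodule.mem_sup.mp hx
    obtain ⟨d, rfl⟩ := Submodule.mem_span_singleton.mp hy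
    rw [map_add, map_smul, smul_eq_mul, hBvv, hypB_symm, hypB_left_zero hvPT ht]
    ring
  have hwW₁ : w ∉ W₁ := by
    intro h
    have h0 := hBvW₁ w h
    rw [hBvw] at h0
    exact one_ne_zero h0
  have hwT : w ∉ T := fun h => hwW₁ (hTW₁ h)
  -- the second generator through T
  set W₂ : Submodule F (Fin (2 * n) → F) := T ⊔ (F ∙ w) with hW₂def
  have hW₂dim : finrank F ↥W₂ = n := by
    rw [hW₂def, finrank_sup_span hwT, hTrank]; omega
  have hW₂iso : HypIsotropic F n W₂ := iso_sup_span hT hwPT hQw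
  have hTW₂ : T ≤ W₂ := le_sup_left
  have hwW₂ : w ∈ W₂ := by
    rw [hW₂def]; exact Submodule.mem_sup_right (Submodule.mem_span_singleton_self w)
  have hW₂PT : W₂ ≤ (hypB F n).orthogonal T := by
    rw [hW₂def]
    exact sup_le hTle ((Submodule.span_singleton_le_iff_mem _ _).mpr hwPT)
  -- the span description of U₀ ⊓ T^⊥
  have hvUT : v ∉ U₀ ⊓ T := fun h => hvT (Submodule.mem_inf.mp h).2
  have hspan_eq : (U₀ ⊓ T) ⊔ (F ∙ v) = U₀ ⊓ (hypB F n).orthogonal T := by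
    refine Submodule.eq_of_le_of_finrank_le
      (sup_le (inf_le_inf le_rfl hTle)
        ((Submodule.span_singleton_le_iff_mem _ _).mpr hv)) ?_
    rw [hinfdim, finrank_sup_span hvUT]
  -- intersection dimensions
  have hK1 : finrank F ↥(W₁ ⊓ U₀) = a + 1 := by
    have h1 : (U₀ ⊓ T) ⊔ (F ∙ v) ≤ W₁ ⊓ U₀ :=
      sup_le (le_inf (inf_le_right.trans hTW₁) inf_le_left)
        (le_inf ((Submodule.span_singleton_le_iff_mem _ _).mpr hvW₁)
          ((Submodule.span_singleton_le_iff_mem _ _).mpr hvU₀))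
    have h2 : W₁ ⊓ U₀ ≤ U₀ ⊓ (hypB F n).orthogonal T :=
      le_inf inf_le_right (inf_le_left.trans hW₁PT)
    have hlb := finrank_mono h1
    have hub := finrank_mono h2
    rw [finrank_sup_span hvUT] at hlb
    rw [hinfdim] at hub
    omega
  have hK2 : finrank F ↥(W₂ ⊓ U₀) = a := by
    have heq : W₂ ⊓ U₀ = U₀ ⊓ T := by
      refine le_antisymm ?_ (le_inf (inf_le_right.trans hTW₂) inf_le_left)
      intro x hx
      obtain ⟨hxW₂, hxU₀⟩ := Submodule.mem_inf.mp hx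
      have hxUT : x ∈ (U₀ ⊓ T) ⊔ (F ∙ v) := by
        rw [hspan_eq]
        exact Submodule.mem_inf.mpr ⟨hxU₀, hW₂PT hxW₂⟩
      obtain ⟨t', ht', y, hy, rfl⟩ := Submodule.mem_sup.mp hxUT
      obtain ⟨d, rfl⟩ := Submodule.mem_span_singleton.mp hy
      rw [hW₂def] at hxW₂
      obtain ⟨t, ht, z, hz, hxeq⟩ := Submodule.mem_sup.mp hxW₂
      obtain ⟨e, rfl⟩ := Submodule.mem_span_singleton.mp hz
      have hcomp1 : hypB F n v (t' + d • v) = 0 := by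
        rw [map_add, map_smul, smul_eq_mul, hBvv, hypB_symm,
          hypB_left_zero hvPT (Submodule.mem_inf.mp ht').2]
        ring
      have hcomp2 : hypB F n v (t' + d • v) = e := by
        rw [← hxeq, map_add, map_smul, smul_eq_mul, hBvw, hypB_symm,
          hypB_left_zero hvPT ht]
        ring
      have he0 : e = 0 := by rw [← hcomp2, hcomp1]
      rw [he0, zero_smul, add_zero] at hxeq
      exact Submodule.mem_inf.mpr ⟨hxU₀, hxeq ▸ ht⟩
    rw [heq, hadef]
  -- T^⊥ = W₁ ⊔ span w
  have hPT_eq : (hypB F n).orthogonal T = W₁ ⊔ (F ∙ w) := by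
    refine (Submodule.eq_of_le_of_finrank_le
      (sup_le hW₁PT ((Submodule.span_singleton_le_iff_mem _ _).mpr hwPT)) ?_).symm
    rw [hPTdim, finrank_sup_span hwW₁, hW₁dim]
  -- any generator through T is W₁ or W₂
  have hW₁W₂ : ∀ W' : Submodule F (Fin (2 * n) → F), HypIsotropic F n W' →
      finrank F ↥W' = n → T ≤ W' → W' = W₁ ∨ W' = W₂ := by
    intro W' hW'iso hW'dim hTW'
    have hW'PT : W' ≤ (hypB F n).orthogonal T :=
      (iso_le_orth hW'iso).trans (orthogonal_le hTW')
    have hnotle : ¬ W' ≤ T := fun h => by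
      have := finrank_mono h; rw [hW'dim, hTrank] at this; omega
    obtain ⟨x, hxW', hxT⟩ := SetLike.not_le_iff_exists.mp hnotle
    have hxPT : x ∈ W₁ ⊔ (F ∙ w) := by rw [← hPT_eq]; exact hW'PT hxW'
    obtain ⟨y, hy, z, hz, rfl⟩ := Submodule.mem_sup.mp hxPT
    obtain ⟨e, rfl⟩ := Submodule.mem_span_singleton.mp hz
    rw [hW₁def] at hy
    obtain ⟨t, ht, z', hz', rfl⟩ := Submodule.mem_sup.mp hy
    obtain ⟨d, rfl⟩ := Submodule.mem_span_singleton.mp hz'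
    rcases eq_or_ne e 0 with rfl | he
    · left
      have hxW₁ : t + d • v + (0 : F) • w ∈ W₁ := by
        rw [zero_smul, add_zero]
        exact Submodule.add_mem _ (hTW₁ ht) (Submodule.smul_mem _ _ hvW₁)
      exact gen_eq (by omega) hTrank hTW' hTW₁ hW'dim hW₁dim hxW' hxW₁ hxT
    rcases eq_or_ne d 0 with rfl | hd
    · right
      have hxW₂ : t + (0 : F) • v + e • w ∈ W₂ := by
        rw [zero_smul, add_zero]
        exact Submodule.add_mem _ (hTW₂ ht) (Submodule.smul_mem _ _ hwW₂)
      exact gen_eq (by omega) hTrank hTW' hTW₂ hW'dim hW₂dim hxW' hxW₂ hxT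
    · exfalso
      have hQx : hypQ F n (t + d • v + e • w) = d * e := by
        rw [hyp_polar, hyp_polar, hypQ_smul, hypQ_smul, hQv, hQw, hT t ht]
        simp only [map_add, map_smul, LinearMap.add_apply, LinearMap.smul_apply,
          smul_eq_mul]
        rw [hypB_left_zero hvPT ht, hypB_left_zero hwPT ht, hBvw]
        ring
      rw [hW'iso _ hxW'] at hQx
      rcases mul_eq_zero.mp hQx.symm with h | h
      · exact hd h
      · exact he h
  -- conclusion
  by_cases hpar : (a + 1) % 2 = n % 2
  · refine ⟨W₁, ⟨⟨hW₁iso, hW₁dim, by rw [hK1]; exact hpar⟩, hTW₁⟩, ?_⟩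
    rintro W' ⟨⟨hW'iso, hW'dim, hW'par⟩, hTW'⟩
    rcases hW₁W₂ W' hW'iso hW'dim hTW' with h | h
    · exact h
    · exfalso; rw [h, hK2] at hW'par; omega
  · have hpar2 : a % 2 = n % 2 := by omega
    refine ⟨W₂, ⟨⟨hW₂iso, hW₂dim, by rw [hK2]; exact hpar2⟩, hTW₂⟩, ?_⟩
    rintro W' ⟨⟨hW'iso, hW'dim, hW'par⟩, hTW'⟩
    rcases hW₁W₂ W' hW'iso hW'dim hTW' with h | h
    · exfalso; rw [h, hK1] at hW'par; omega
    · exact h
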